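/- The second Fréchet derivative of the Neohookean energy Ψ(F) = (μ/2)(F:F − d) − μ ln J + (λ/2)Θ(J)², J = det F, is the elastic modulus A(F) = μ(I ⊗̄ I + F^{−T} ⊗̲ F^{−1}) − λ J Θ(J) Θ'(J) F^{−T} ⊗̲ F^{−1} + λ [JΘ(J)(JΘ''(J) + Θ'(J)) + (JΘ'(J))²] F^{−T} ⊗ F^{−T}. -/

import Mathlib

noncomputable section
open Matrix Topology Filter

attribute [local instance] Matrix.normedAddCommGroup Matrix.normedSpace

/-- Frobenius inner product of two matrices. -/
def mdot {d : ℕ} (A B : Matrix (Fin d) (Fin d) ℝ) : ℝ := ∑ i, ∑ j, A i j * B i j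

/-- A fourth-order tensor on `ℝ^{d×d}`. -/
def Tensor4 (d : ℕ) := Fin d → Fin d → Fin d → Fin d → ℝ

/-- Action of a fourth-order tensor on a matrix: `(T:H)_{ij} = Σ_{kl} T_{ijkl} H_{kl}`. -/
def t4Act {d : ℕ} (T : Tensor4 d) (H : Matrix (Fin d) (Fin d) ℝ) :
    Matrix (Fin d) (Fin d) ℝ :=
  Matrix.of fun i j => ∑ k, ∑ l, T i j k l * H k l

/-- `(A ⊗ B)_{ijkl} = A_{ij} B_{kl}`. -/
def otimes {d : ℕ} (A B : Matrix (Fin d) (Fin d) ℝ) : Tensor4 d :=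
  fun i j k l => A i j * B k l

/-- `(A ⊗̲ B)_{ijkl} = A_{il} B_{jk}`. -/
def uotimes {d : ℕ} (A B : Matrix (Fin d) (Fin d) ℝ) : Tensor4 d :=
  fun i j k l => A i l * B j k

/-- `(A ⊗̄ B)_{ijkl} = A_{ik} B_{jl}`. -/
def botimes {d : ℕ} (A B : Matrix (Fin d) (Fin d) ℝ) : Tensor4 d :=
  fun i j k l => A i k * B j l

/-- The elastic modulus of the Neohookean material:
`A(F) = μ(I ⊗̄ I + F^{−T} ⊗̲ F^{−1}) − λ J Θ(J) Θ'(J) F^{−T} ⊗̲ F^{−1}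
       + λ [JΘ(J)(JΘ''(J) + Θ'(J)) + (JΘ'(J))²] F^{−T} ⊗ F^{−T}`, `J = det F`. -/
def elasticModulus {d : ℕ} (μ lam : ℝ) (Θ Θ' Θ'' : ℝ → ℝ)
    (F : Matrix (Fin d) (Fin d) ℝ) : Tensor4 d :=
  fun i j k l =>
    let J := F.det
    μ * (botimes (1 : Matrix (Fin d) (Fin d) ℝ) 1 i j k l
          + uotimes (F⁻¹)ᵀ F⁻¹ i j k l)
    - lam * J * Θ J * Θ' J * uotimes (F⁻¹)ᵀ F⁻¹ i j k l
    + lam * (J * Θ J * (J * Θ'' J + Θ' J) + (J * Θ' J) ^ 2)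
        * otimes (F⁻¹)ᵀ (F⁻¹)ᵀ i j k l

section Aux

/-- entry projection as CLM -/
def entryL (d : ℕ) (i j : Fin d) : Matrix (Fin d) (Fin d) ℝ →L[ℝ] ℝ :=
  LinearMap.toContinuousLinearMap
  { toFun := fun G => G i j
    map_add' := fun _ _ => rfl
    map_smul' := fun _ _ => rfl }

@[simp] lemma entryL_apply (i j : Fin d) (G : Matrix (Fin d) (Fin d) ℝ) :
    entryL d i j G = G i j := rfl

lemma hasFDerivAt_entry (i j : Fin d) (G : Matrix (Fin d) (Fin d) ℝ) :
    HasFDerivAt (fun G : Matrix (Fin d) (Fin d) ℝ => G i j) (entryL d i j) G :=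
  (entryL d i j).hasFDerivAt

/-- derivative of det as CLM -/
def detD (G : Matrix (Fin d) (Fin d) ℝ) : Matrix (Fin d) (Fin d) ℝ →L[ℝ] ℝ :=
  LinearMap.toContinuousLinearMap
  { toFun := fun K => Matrix.trace (G.adjugate * K)
    map_add' := fun x y => by simp [Matrix.mul_add]
    map_smul' := fun c x => by simp [Matrix.mul_smul] }

@[simp] lemma detD_apply (G K : Matrix (Fin d) (Fin d) ℝ) :
    detD G K = Matrix.trace (G.adjugate * K) := rfl

lemma hasFDerivAt_det (hd : d = 2 ∨ d = 3) (G : Matrix (Fin d) (Fin d) ℝ) :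
    HasFDerivAt (fun G : Matrix (Fin d) (Fin d) ℝ => G.det) (detD G) G := by
  rcases hd with rfl | rfl
  · have hfun : (fun G : Matrix (Fin 2) (Fin 2) ℝ => G.det)
        = fun G => G 0 0 * G 1 1 - G 0 1 * G 1 0 := funext fun G => Matrix.det_fin_two G
    rw [hfun]
    have h := ((hasFDerivAt_entry (0:Fin 2) 0 G).mul (hasFDerivAt_entry 1 1 G)).sub
      ((hasFDerivAt_entry (0:Fin 2) 1 G).mul (hasFDerivAt_entry 1 0 G))
    refine h.congr_fderiv ?_
    ext K
    change G 0 0 * K 1 1 + G 1 1 * K 0 0 - (G 0 1 * K 1 0 + G 1 0 * K 0 1)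
      = Matrix.trace (G.adjugate * K)
    simp [Matrix.trace_fin_two, Matrix.mul_apply, Matrix.adjugate_fin_two, Fin.sum_univ_succ,
      Matrix.vecMul, dotProduct]
    ring
  · have hfun : (fun G : Matrix (Fin 3) (Fin 3) ℝ => G.det)
        = fun G => G 0 0 * G 1 1 * G 2 2 - G 0 0 * G 1 2 * G 2 1 - G 0 1 * G 1 0 * G 2 2
            + G 0 1 * G 1 2 * G 2 0 + G 0 2 * G 1 0 * G 2 1 - G 0 2 * G 1 1 * G 2 0 :=
      funext fun G => Matrix.det_fin_three G
    rw [hfun]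
    have e1 := ((hasFDerivAt_entry (0:Fin 3) 0 G).mul (hasFDerivAt_entry 1 1 G)).mul
      (hasFDerivAt_entry 2 2 G)
    have e2 := ((hasFDerivAt_entry (0:Fin 3) 0 G).mul (hasFDerivAt_entry 1 2 G)).mul
      (hasFDerivAt_entry 2 1 G)
    have e3 := ((hasFDerivAt_entry (0:Fin 3) 1 G).mul (hasFDerivAt_entry 1 0 G)).mul
      (hasFDerivAt_entry 2 2 G)
    have e4 := ((hasFDerivAt_entry (0:Fin 3) 1 G).mul (hasFDerivAt_entry 1 2 G)).mul
      (hasFDerivAt_entry 2 0 G)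
    have e5 := ((hasFDerivAt_entry (0:Fin 3) 2 G).mul (hasFDerivAt_entry 1 0 G)).mul
      (hasFDerivAt_entry 2 1 G)
    have e6 := ((hasFDerivAt_entry (0:Fin 3) 2 G).mul (hasFDerivAt_entry 1 1 G)).mul
      (hasFDerivAt_entry 2 0 G)
    have h := ((((e1.sub e2).sub e3).add e4).add e5).sub e6
    refine h.congr_fderiv ?_
    ext K
    change (((((G 0 0 * G 1 1 * K 2 2 + G 2 2 * (G 0 0 * K 1 1 + G 1 1 * K 0 0))
        - (G 0 0 * G 1 2 * K 2 1 + G 2 1 * (G 0 0 * K 1 2 + G 1 2 * K 0 0)))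
        - (G 0 1 * G 1 0 * K 2 2 + G 2 2 * (G 0 1 * K 1 0 + G 1 0 * K 0 1)))
        + (G 0 1 * G 1 2 * K 2 0 + G 2 0 * (G 0 1 * K 1 2 + G 1 2 * K 0 1)))
        + (G 0 2 * G 1 0 * K 2 1 + G 2 1 * (G 0 2 * K 1 0 + G 1 0 * K 0 2)))
        - (G 0 2 * G 1 1 * K 2 0 + G 2 0 * (G 0 2 * K 1 1 + G 1 1 * K 0 2))
      = Matrix.trace (G.adjugate * K)
    simp [Matrix.trace_fin_three, Matrix.mul_apply, Matrix.adjugate_fin_three, Fin.sum_univ_succ,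
      Matrix.vecMul, dotProduct]
    ring

lemma trAdj (hd : d = 2 ∨ d = 3) (G H : Matrix (Fin d) (Fin d) ℝ) :
    ∑ i, (G.updateRow i (H i)).det = Matrix.trace (G.adjugate * H) := by
  rcases hd with rfl | rfl
  · simp [Matrix.det_fin_two, Matrix.trace_fin_two, Matrix.mul_apply, Matrix.adjugate_fin_two,
      Fin.sum_univ_succ, Matrix.updateRow_apply, Matrix.vecMul, dotProduct]
    ring
  · simp [Matrix.det_fin_three, Matrix.trace_fin_three, Matrix.mul_apply, Matrix.adjugate_fin_three,
      Fin.sum_univ_succ, Matrix.updateRow_apply, Matrix.vecMul, dotProduct]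
    ring

/-- row-killing CLM : K ↦ updateRow K i 0 -/
def rowKill (d : ℕ) (i : Fin d) :
    Matrix (Fin d) (Fin d) ℝ →L[ℝ] Matrix (Fin d) (Fin d) ℝ :=
  LinearMap.toContinuousLinearMap
  { toFun := fun K => K.updateRow i 0
    map_add' := fun x y => by
      ext a b; by_cases h : a = i <;> simp [Matrix.updateRow_apply, h]
    map_smul' := fun c x => by
      ext a b; by_cases h : a = i <;> simp [Matrix.updateRow_apply, h] }

@[simp] lemma rowKill_apply (i : Fin d) (K : Matrix (Fin d) (Fin d) ℝ) :
    rowKill d i K = K.updateRow i 0 := rfl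

lemma hasFDerivAt_updateRow (i : Fin d) (b : Fin d → ℝ) (G : Matrix (Fin d) (Fin d) ℝ) :
    HasFDerivAt (fun G : Matrix (Fin d) (Fin d) ℝ => G.updateRow i b) (rowKill d i) G := by
  have : (fun G : Matrix (Fin d) (Fin d) ℝ => G.updateRow i b)
      = fun G => rowKill d i G + (0 : Matrix (Fin d) (Fin d) ℝ).updateRow i b := by
    funext G; ext a c
    by_cases h : a = i <;> simp [Matrix.updateRow_apply, h]
  rw [this]
  exact ((rowKill d i).hasFDerivAt).add_const _

/-- K ↦ mdot K H as a CLM -/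
def mdotR (H : Matrix (Fin d) (Fin d) ℝ) : Matrix (Fin d) (Fin d) ℝ →L[ℝ] ℝ :=
  LinearMap.toContinuousLinearMap
  { toFun := fun K => mdot K H
    map_add' := fun x y => by simp [mdot, add_mul, Finset.sum_add_distrib]
    map_smul' := fun c x => by
      simp [mdot, Finset.mul_sum, mul_assoc]
    }

@[simp] lemma mdotR_apply (H K : Matrix (Fin d) (Fin d) ℝ) : mdotR H K = mdot K H := rfl

lemma mdot_comm (A B : Matrix (Fin d) (Fin d) ℝ) : mdot A B = mdot B A := by
  unfold mdot; congr 1; ext i; congr 1; ext j; ring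

lemma hasFDerivAt_mdot_self (G : Matrix (Fin d) (Fin d) ℝ) :
    HasFDerivAt (fun G : Matrix (Fin d) (Fin d) ℝ => mdot G G) ((2:ℝ) • mdotR G) G := by
  have h : HasFDerivAt (fun G : Matrix (Fin d) (Fin d) ℝ => mdot G G)
      (∑ i : Fin d, ∑ j : Fin d, (G i j • entryL d i j + G i j • entryL d i j)) G := by
    unfold mdot
    apply HasFDerivAt.fun_sum
    intro i _
    apply HasFDerivAt.fun_sum
    intro j _
    exact (hasFDerivAt_entry i j G).mul (hasFDerivAt_entry i j G)
  refine h.congr_fderiv ?_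
  ext K
  simp [mdot, Finset.sum_add_distrib, Finset.mul_sum, two_mul]
  congr 1 <;> · congr 1; ext i; congr 1; ext j; ring

section psi
variable (μ lam : ℝ) (Θ Θ' Θ'' : ℝ → ℝ)

/-- first derivative of Ψ as CLM -/
def psiD (G : Matrix (Fin d) (Fin d) ℝ) : Matrix (Fin d) (Fin d) ℝ →L[ℝ] ℝ :=
  μ • mdotR G + (lam * Θ G.det * Θ' G.det - μ * (G.det)⁻¹) • detD G

lemma hasFDerivAt_psi (hd : d = 2 ∨ d = 3)
    (hΘ : ∀ x : ℝ, 0 < x → HasDerivAt Θ (Θ' x) x)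
    (Ψ : Matrix (Fin d) (Fin d) ℝ → ℝ)
    (hΨ : ∀ F : Matrix (Fin d) (Fin d) ℝ,
      Ψ F = μ / 2 * (mdot F F - d) - μ * Real.log F.det + lam / 2 * (Θ F.det) ^ 2)
    (G : Matrix (Fin d) (Fin d) ℝ) (hG : 0 < G.det) :
    HasFDerivAt Ψ (psiD μ lam Θ Θ' G) G := by
  have hfun : Ψ = fun G : Matrix (Fin d) (Fin d) ℝ =>
      μ / 2 * (mdot G G - d) - μ * Real.log G.det + lam / 2 * (Θ G.det) ^ 2 :=
    funext hΨ
  rw [hfun]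
  have h1 : HasFDerivAt (fun G : Matrix (Fin d) (Fin d) ℝ => μ / 2 * (mdot G G - d))
      ((μ/2) • ((2:ℝ) • mdotR G)) G :=
    ((hasFDerivAt_mdot_self G).sub_const _).const_mul _
  have h2 : HasFDerivAt (fun G : Matrix (Fin d) (Fin d) ℝ => μ * Real.log G.det)
      (μ • ((G.det)⁻¹ • detD G)) G :=
    ((Real.hasDerivAt_log (ne_of_gt hG)).comp_hasFDerivAt G (hasFDerivAt_det hd G)).const_mul μ
  have h3 : HasFDerivAt (fun G : Matrix (Fin d) (Fin d) ℝ => lam / 2 * (Θ G.det) ^ 2)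
      ((lam/2) • (((2:ℝ) * Θ G.det ^ 1 * Θ' G.det) • detD G)) G :=
    ((((hΘ G.det hG).pow 2).comp_hasFDerivAt G (hasFDerivAt_det hd G)).const_mul _)
  have h := (h1.sub h2).add h3
  refine h.congr_fderiv ?_
  ext K
  change (μ/2) * (2 * mdot K G) - μ * (G.det⁻¹ * Matrix.trace (G.adjugate * K))
      + (lam/2) * ((2 * Θ G.det ^ 1 * Θ' G.det) * Matrix.trace (G.adjugate * K))
    = μ * mdot K G + (lam * Θ G.det * Θ' G.det - μ * (G.det)⁻¹) * Matrix.trace (G.adjugate * K)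
  ring

end psi

lemma adj_update_sum (hd : d = 2 ∨ d = 3) (F H K : Matrix (Fin d) (Fin d) ℝ) :
    (∑ i, Matrix.trace ((F.updateRow i (H i)).adjugate * (K.updateRow i 0))) * F.det
      = Matrix.trace (F.adjugate * H) * Matrix.trace (F.adjugate * K)
        - Matrix.trace (F.adjugate * H * (F.adjugate * K)) := by
  rcases hd with rfl | rfl
  · simp [Matrix.det_fin_two, Matrix.trace_fin_two, Matrix.mul_apply, Matrix.adjugate_fin_two,
      Fin.sum_univ_succ, Matrix.updateRow_apply, Matrix.vecMul, dotProduct]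
    ring
  · simp [Matrix.det_fin_three, Matrix.trace_fin_three, Matrix.mul_apply, Matrix.adjugate_fin_three,
      Fin.sum_univ_succ, Matrix.updateRow_apply, Matrix.vecMul, dotProduct]
    ring

set_option maxHeartbeats 1000000 in
lemma pairing (hd : d = 2 ∨ d = 3) (μ lam : ℝ) (Θ Θ' Θ'' : ℝ → ℝ)
    (F H K : Matrix (Fin d) (Fin d) ℝ) :
    mdot (t4Act (elasticModulus μ lam Θ Θ' Θ'' F) H) K
      = μ * (mdot H K + Matrix.trace (F⁻¹ * H * (F⁻¹ * K)))
        - lam * F.det * Θ F.det * Θ' F.det * Matrix.trace (F⁻¹ * H * (F⁻¹ * K))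
        + lam * (F.det * Θ F.det * (F.det * Θ'' F.det + Θ' F.det) + (F.det * Θ' F.det) ^ 2)
            * (Matrix.trace (F⁻¹ * H) * Matrix.trace (F⁻¹ * K)) := by
  rcases hd with rfl | rfl
  · simp [mdot, t4Act, elasticModulus, otimes, uotimes, botimes, Matrix.trace_fin_two,
      Matrix.mul_apply, Fin.sum_univ_succ, Matrix.one_apply, Matrix.transpose_apply]
    ring
  · simp [mdot, t4Act, elasticModulus, otimes, uotimes, botimes, Matrix.trace_fin_three,
      Matrix.mul_apply, Fin.sum_univ_succ, Matrix.one_apply, Matrix.transpose_apply]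
    ring

lemma trace_inv_mul {F : Matrix (Fin d) (Fin d) ℝ} (X : Matrix (Fin d) (Fin d) ℝ) :
    Matrix.trace (F⁻¹ * X) = (F.det)⁻¹ * Matrix.trace (F.adjugate * X) := by
  rw [Matrix.inv_def, Ring.inverse_eq_inv', Matrix.smul_mul, Matrix.trace_smul, smul_eq_mul]

lemma trace_inv_mul₂ {F : Matrix (Fin d) (Fin d) ℝ} (X Y : Matrix (Fin d) (Fin d) ℝ) :
    Matrix.trace (F⁻¹ * X * (F⁻¹ * Y))
      = (F.det)⁻¹ * ((F.det)⁻¹ * Matrix.trace (F.adjugate * X * (F.adjugate * Y))) := by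
  simp only [Matrix.inv_def, Ring.inverse_eq_inv', Matrix.smul_mul, Matrix.mul_smul,
    Matrix.trace_smul, smul_eq_mul, smul_smul]
  ring

end Aux

/-- the second Fréchet derivative of the Neohookean energy
`Ψ(F) = (μ/2)(F:F − d) − μ ln J + (λ/2)Θ(J)²`, `J = det F`, at a matrix `F` with
positive determinant, is represented via the Frobenius pairing by the elastic
modulus `A(F)`: `D²Ψ(F)[H,K] = (A(F):H) : K` for all `H, K`. -/
theorem neohookean_elastic_modulus
    (d : ℕ) (hd : d = 2 ∨ d = 3) (μ lam : ℝ)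
    (Θ Θ' Θ'' : ℝ → ℝ)
    (hΘ : ∀ x : ℝ, 0 < x → HasDerivAt Θ (Θ' x) x)
    (hΘ' : ∀ x : ℝ, 0 < x → HasDerivAt Θ' (Θ'' x) x)
    (hΘcont : ContinuousOn Θ'' (Set.Ioi 0))
    (Ψ : Matrix (Fin d) (Fin d) ℝ → ℝ)
    (hΨ : ∀ F : Matrix (Fin d) (Fin d) ℝ,
      Ψ F = μ / 2 * (mdot F F - d) - μ * Real.log F.det + lam / 2 * (Θ F.det) ^ 2)
    (F : Matrix (Fin d) (Fin d) ℝ) (hF : 0 < F.det) :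
    ∀ H K : Matrix (Fin d) (Fin d) ℝ,
      fderiv ℝ (fun G => fderiv ℝ Ψ G H) F K
        = mdot (t4Act (elasticModulus μ lam Θ Θ' Θ'' F) H) K := by
  intro H K
  have hne : F.det ≠ 0 := ne_of_gt hF
  have hdetc : Continuous fun G : Matrix (Fin d) (Fin d) ℝ => G.det :=
    continuous_iff_continuousAt.mpr fun G => (hasFDerivAt_det hd G).differentiableAt.continuousAt
  have hU : ∀ᶠ G in 𝓝 F, 0 < G.det := (isOpen_lt continuous_const hdetc).mem_nhds hF
  have hev : (fun G => fderiv ℝ Ψ G H) =ᶠ[𝓝 F]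
      (fun G : Matrix (Fin d) (Fin d) ℝ => μ * mdot G H
        + (lam * Θ G.det * Θ' G.det - μ * (G.det)⁻¹)
          * (∑ i, (G.updateRow i (H i)).det)) := by
    filter_upwards [hU] with G hG
    rw [(hasFDerivAt_psi μ lam Θ Θ' hd hΘ Ψ hΨ G hG).fderiv, trAdj hd]
    simp [psiD, mdot_comm]
  rw [hev.fderiv_eq]
  have hA : HasFDerivAt (fun G : Matrix (Fin d) (Fin d) ℝ => μ * mdot G H)
      (μ • mdotR H) F := ((mdotR H).hasFDerivAt).const_mul μ
  have hS : HasFDerivAt (fun G : Matrix (Fin d) (Fin d) ℝ => ∑ i, (G.updateRow i (H i)).det)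
      (∑ i, (detD (F.updateRow i (H i))).comp (rowKill d i)) F :=
    HasFDerivAt.fun_sum fun i _ => (hasFDerivAt_det hd _).comp F (hasFDerivAt_updateRow i (H i) F)
  have hc : HasDerivAt (fun t : ℝ => lam * Θ t * Θ' t - μ * t⁻¹)
      (lam * Θ' F.det * Θ' F.det + lam * Θ F.det * Θ'' F.det - μ * (-(F.det ^ 2)⁻¹)) F.det := by
    have := (((hΘ F.det hF).const_mul lam).mul (hΘ' F.det hF)).sub
      ((hasDerivAt_inv hne).const_mul μ)
    exact this
  have hcF : HasFDerivAt
      (fun G : Matrix (Fin d) (Fin d) ℝ => lam * Θ G.det * Θ' G.det - μ * (G.det)⁻¹)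
      ((lam * Θ' F.det * Θ' F.det + lam * Θ F.det * Θ'' F.det - μ * (-(F.det ^ 2)⁻¹)) • detD F)
      F := hc.comp_hasFDerivAt F (hasFDerivAt_det hd F)
  have htot := hA.add (hcF.mul hS)
  rw [(show HasFDerivAt (fun G : Matrix (Fin d) (Fin d) ℝ => μ * mdot G H
      + (lam * Θ G.det * Θ' G.det - μ * (G.det)⁻¹) * (∑ i, (G.updateRow i (H i)).det)) _ F
    from htot).fderiv]
  rw [pairing hd]
  have hsum : (∑ i, Matrix.trace ((F.updateRow i (H i)).adjugate * (K.updateRow i 0)))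
      = (Matrix.trace (F.adjugate * H) * Matrix.trace (F.adjugate * K)
          - Matrix.trace (F.adjugate * H * (F.adjugate * K))) / F.det := by
    rw [eq_div_iff hne]; exact adj_update_sum hd F H K
  change μ * mdot K H + ((lam * Θ F.det * Θ' F.det - μ * (F.det)⁻¹)
      * (∑ i, (detD (F.updateRow i (H i))).comp (rowKill d i)) K
      + (∑ i, (F.updateRow i (H i)).det)
        * ((lam * Θ' F.det * Θ' F.det + lam * Θ F.det * Θ'' F.det - μ * (-(F.det ^ 2)⁻¹))
          * Matrix.trace (F.adjugate * K))) = _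
  simp only [ContinuousLinearMap.add_apply, ContinuousLinearMap.smul_apply,
    ContinuousLinearMap.coe_sum', Finset.sum_apply, ContinuousLinearMap.coe_comp',
    Function.comp_apply, rowKill_apply, detD_apply, mdotR_apply, smul_eq_mul]
  rw [hsum, trAdj hd F H, trace_inv_mul H, trace_inv_mul K, trace_inv_mul₂ H K,
    mdot_comm K H]
  field_simp
  ring
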